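/- Let k be a commutative ring, S a type, M a k-module, and μ : M →ₗ[k] M ⊗[k] (S →₀ k) a counital coassociative coaction of S →₀ k on M. For each s ∈ S, let p_s : M →ₗ[k] M be the composite of μ with id_M ⊗ (evaluation at s) followed by the canonical isomorphism M ⊗[k] k ≅ M. Then: (1) p_s ∘ p_s = p_s for every s; (2) p_s ∘ p_t = 0 whenever s ≠ t; (3) for every m ∈ M the family (p_s m)_{s ∈ S} has finite support and Σ_{s ∈ S} p_s m = m; and (4) the family of submodules (LinearMap.range p_s)_{s ∈ S} is an internal direct sum decomposition of M. -/

import Mathlib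

open TensorProduct

noncomputable section

variable {k S M : Type*} [CommRing k] [AddCommGroup M] [Module k M]

/-- Given a coaction `μ` of `S →₀ k` on `M`, the projection `p_s : M →ₗ[k] M` is the
composite of `μ` with `id ⊗ (evaluation at s)` followed by `M ⊗[k] k ≅ M`. -/
def coactionProj (μ : M →ₗ[k] M ⊗[k] (S →₀ k)) (s : S) : M →ₗ[k] M :=
  (TensorProduct.rid k M).toLinearMap ∘ₗ TensorProduct.map LinearMap.id (Finsupp.lapply s) ∘ₗ μ

end

section aux

variable {k S M : Type*} [CommRing k] [DecidableEq S] [AddCommGroup M] [Module k M]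

lemma coactionProj_eq (μ : M →ₗ[k] M ⊗[k] (S →₀ k)) (s : S) (m : M) :
    coactionProj μ s m = TensorProduct.finsuppScalarRight k k M S (μ m) s := by
  rw [TensorProduct.finsuppScalarRight_apply]
  simp [coactionProj, LinearMap.lTensor, AlgebraTensorModule.rid_eq_rid]

lemma mu_eq_sum (μ : M →ₗ[k] M ⊗[k] (S →₀ k)) (m : M) :
    μ m = ∑ s ∈ (TensorProduct.finsuppScalarRight k k M S (μ m)).support,
      coactionProj μ s m ⊗ₜ[k] Finsupp.single s 1 := by
  conv_lhs => rw [← (TensorProduct.finsuppScalarRight k k M S).symm_apply_apply (μ m),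
    ← Finsupp.sum_single (TensorProduct.finsuppScalarRight k k M S (μ m))]
  rw [map_finsuppSum, Finsupp.sum]
  exact Finset.sum_congr rfl fun s _ => by
    rw [TensorProduct.finsuppScalarRight_symm_apply_single, coactionProj_eq]

lemma proj_zero_of_not_mem (μ : M →ₗ[k] M ⊗[k] (S →₀ k)) (m : M) (s : S)
    (h : s ∉ (TensorProduct.finsuppScalarRight k k M S (μ m)).support) :
    coactionProj μ s m = 0 := by
  rw [coactionProj_eq]; exact Finsupp.notMem_support_iff.mp h

lemma sum_proj (μ : M →ₗ[k] M ⊗[k] (S →₀ k))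
    (hcounit : TensorProduct.map LinearMap.id Coalgebra.counit ∘ₗ μ
      = (TensorProduct.rid k M).symm.toLinearMap) (m : M) :
    ∑ s ∈ (TensorProduct.finsuppScalarRight k k M S (μ m)).support,
      coactionProj μ s m = m := by
  have H := LinearMap.congr_fun hcounit m
  simp only [LinearMap.comp_apply, LinearEquiv.coe_coe] at H
  rw [mu_eq_sum μ m, map_sum] at H
  have H2 := congrArg (TensorProduct.rid k M) H
  rw [map_sum, LinearEquiv.apply_symm_apply] at H2
  refine Eq.trans (Finset.sum_congr rfl fun s _ => ?_) H2
  simp [Finsupp.counit_single, CommSemiring.counit_apply]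

lemma proj_proj (μ : M →ₗ[k] M ⊗[k] (S →₀ k))
    (hcoassoc : TensorProduct.map μ LinearMap.id ∘ₗ μ
      = (TensorProduct.assoc k M (S →₀ k) (S →₀ k)).symm.toLinearMap
          ∘ₗ TensorProduct.map LinearMap.id Coalgebra.comul ∘ₗ μ)
    (t u : S) (m : M) :
    coactionProj μ t (coactionProj μ u m)
      = if t = u then coactionProj μ u m else 0 := by
  have H := LinearMap.congr_fun hcoassoc m
  simp only [LinearMap.comp_apply, LinearEquiv.coe_coe] at H
  set F : (M ⊗[k] (S →₀ k)) ⊗[k] (S →₀ k) →ₗ[k] M :=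
    (TensorProduct.rid k M).toLinearMap ∘ₗ
      TensorProduct.map
        ((TensorProduct.rid k M).toLinearMap ∘ₗ
          TensorProduct.map LinearMap.id (Finsupp.lapply t))
        (Finsupp.lapply u) with hF
  have H2 := congrArg F H
  set supp := (TensorProduct.finsuppScalarRight k k M S (μ m)).support with hsupp
  -- per-term computations
  have key1 : ∀ (x : M) (b : S), F (μ x ⊗ₜ[k] Finsupp.single b 1)
      = if b = u then coactionProj μ t x else 0 := by
    intro x b
    rw [hF]
    simp only [LinearMap.comp_apply, LinearEquiv.coe_coe, TensorProduct.map_tmul,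
      Finsupp.lapply_apply, TensorProduct.rid_tmul, Finsupp.single_apply]
    by_cases hb : b = u
    · rw [if_pos hb, if_pos hb, one_smul, coactionProj]
      simp
    · rw [if_neg hb, if_neg hb, zero_smul]
  have key2 : ∀ (x : M) (b : S),
      F ((TensorProduct.assoc k M (S →₀ k) (S →₀ k)).symm
        (x ⊗ₜ[k] (Finsupp.single b (1:k) ⊗ₜ[k] Finsupp.single b (1:k))))
      = if b = u then (if b = t then x else 0) else 0 := by
    intro x b
    rw [TensorProduct.assoc_symm_tmul, hF]
    simp only [LinearMap.comp_apply, LinearEquiv.coe_coe, TensorProduct.map_tmul,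
      Finsupp.lapply_apply, TensorProduct.rid_tmul, LinearMap.id_coe, id_eq,
      Finsupp.single_apply]
    by_cases hbu : b = u
    · rw [if_pos hbu, if_pos hbu, one_smul]
      by_cases hbt : b = t
      · rw [if_pos hbt, if_pos hbt, one_smul]
      · rw [if_neg hbt, if_neg hbt, zero_smul]
    · rw [if_neg hbu, if_neg hbu, zero_smul]
  have hL : F (TensorProduct.map μ LinearMap.id (μ m))
      = coactionProj μ t (coactionProj μ u m) := by
    rw [mu_eq_sum μ m, map_sum, map_sum, ← hsupp]
    simp only [TensorProduct.map_tmul, LinearMap.id_coe, id_eq, key1]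
    rw [Finset.sum_ite_eq' supp u]
    by_cases hu : u ∈ supp
    · rw [if_pos hu]
    · rw [if_neg hu, proj_zero_of_not_mem μ m u (hsupp ▸ hu), map_zero]
  have hR : F ((TensorProduct.assoc k M (S →₀ k) (S →₀ k)).symm
        (TensorProduct.map LinearMap.id Coalgebra.comul (μ m)))
      = if t = u then coactionProj μ u m else 0 := by
    rw [mu_eq_sum μ m, map_sum, map_sum, map_sum, ← hsupp]
    have hcom : ∀ s : S, (Coalgebra.comul (R := k) (Finsupp.single s (1:k)))
        = Finsupp.single s (1:k) ⊗ₜ[k] Finsupp.single s (1:k) := by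
      intro s; rw [Finsupp.comul_single]; simp
    simp only [TensorProduct.map_tmul, LinearMap.id_coe, id_eq, hcom, key2]
    rw [Finset.sum_ite_eq' supp u]
    by_cases hu : u ∈ supp
    · rw [if_pos hu]
      by_cases htu : t = u
      · rw [if_pos htu.symm, if_pos htu]
      · rw [if_neg (fun h => htu h.symm), if_neg htu]
    · rw [if_neg hu, proj_zero_of_not_mem μ m u (hsupp ▸ hu)]
      simp
  rw [hL, hR] at H2
  exact H2

end aux

/-- A counital coassociative coaction of `S →₀ k` on `M` yields a family of orthogonal
idempotent projections `p_s` summing to the identity, whose images form an internal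
direct sum decomposition of `M`. -/
theorem decomposition_of_coaction
    {k S M : Type*} [CommRing k] [DecidableEq S] [AddCommGroup M] [Module k M]
    (μ : M →ₗ[k] M ⊗[k] (S →₀ k))
    (hcounit : TensorProduct.map LinearMap.id Coalgebra.counit ∘ₗ μ
      = (TensorProduct.rid k M).symm.toLinearMap)
    (hcoassoc : TensorProduct.map μ LinearMap.id ∘ₗ μ
      = (TensorProduct.assoc k M (S →₀ k) (S →₀ k)).symm.toLinearMap
          ∘ₗ TensorProduct.map LinearMap.id Coalgebra.comul ∘ₗ μ) :
    (∀ s : S, coactionProj μ s ∘ₗ coactionProj μ s = coactionProj μ s) ∧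
    (∀ s t : S, s ≠ t → coactionProj μ s ∘ₗ coactionProj μ t = 0) ∧
    (∀ m : M, (Function.support fun s : S => coactionProj μ s m).Finite ∧
      ∑ᶠ s : S, coactionProj μ s m = m) ∧
    DirectSum.IsInternal fun s : S => LinearMap.range (coactionProj μ s) := by
  have hidem : ∀ s : S, coactionProj μ s ∘ₗ coactionProj μ s = coactionProj μ s := by
    intro s; ext m
    rw [LinearMap.comp_apply, proj_proj μ hcoassoc s s m, if_pos rfl]
  have horth : ∀ s t : S, s ≠ t → coactionProj μ s ∘ₗ coactionProj μ t = 0 := by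
    intro s t hst; ext m
    rw [LinearMap.comp_apply, proj_proj μ hcoassoc s t m, if_neg hst, LinearMap.zero_apply]
  have hsupp : ∀ m : M, (Function.support fun s : S => coactionProj μ s m)
      ⊆ ↑(TensorProduct.finsuppScalarRight k k M S (μ m)).support := by
    intro m s hs
    by_contra h
    exact hs (proj_zero_of_not_mem μ m s h)
  have hsum : ∀ m : M, ∑ᶠ s : S, coactionProj μ s m = m := by
    intro m
    rw [finsum_eq_sum_of_support_subset _ (hsupp m)]
    exact sum_proj μ hcounit m
  refine ⟨hidem, horth, fun m => ⟨Set.Finite.subset (Finset.finite_toSet _) (hsupp m), hsum m⟩, ?_⟩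
  apply DirectSum.isInternal_submodule_of_iSupIndep_of_iSup_eq_top
  · intro s
    rw [disjoint_iff_inf_le]
    rintro x ⟨⟨y, rfl⟩, hx2⟩
    have hker : (⨆ t, ⨆ _ : t ≠ s, LinearMap.range (coactionProj μ t))
        ≤ LinearMap.ker (coactionProj μ s) := by
      refine iSup_le fun t => iSup_le fun hts => ?_
      rw [LinearMap.range_le_ker_iff]
      exact horth s t (Ne.symm hts)
    have h0 : coactionProj μ s (coactionProj μ s y) = 0 := hker hx2
    have h1 : coactionProj μ s (coactionProj μ s y) = coactionProj μ s y :=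
      LinearMap.congr_fun (hidem s) y
    simpa [h1] using h0.symm ▸ h1.symm
  · rw [eq_top_iff]
    intro m _
    rw [← hsum m, finsum_eq_sum_of_support_subset _ (hsupp m)]
    exact Submodule.sum_mem _ fun s _ =>
      Submodule.mem_iSup_of_mem s ⟨m, rfl⟩
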